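/- For every natural number l, the state after l Grover iterations starting from the uniform superposition is (U_S ∘ U_A)^l s = sin((2l+1)θ) • ã + cos((2l+1)θ) • t. -/

import Mathlib

open scoped BigOperators

private lemma grover_inner_sum_single {n : ℕ} (B C : Finset (Fin n)) :
    (inner ℂ (∑ i ∈ B, EuclideanSpace.single i (1:ℂ))
      (∑ j ∈ C, EuclideanSpace.single j (1:ℂ)) : ℂ) = ((B ∩ C).card : ℂ) := by
  rw [sum_inner]
  have h : ∀ i : Fin n, (inner ℂ (EuclideanSpace.single i (1:ℂ))
      (∑ j ∈ C, EuclideanSpace.single j (1:ℂ)) : ℂ) = if i ∈ C then 1 else 0 := by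
    intro i
    rw [EuclideanSpace.inner_single_left]
    rw [show ((∑ j ∈ C, EuclideanSpace.single j (1:ℂ)) i)
        = ∑ j ∈ C, (EuclideanSpace.single j (1:ℂ)) i from by simp [Finset.sum_apply]]
    simp [EuclideanSpace.single_apply]
  simp only [h]
  rw [Finset.sum_ite_mem]
  simp

/-- After `l` Grover iterations starting from the uniform superposition `s`, the state is
`sin((2l+1)θ) • ã + cos((2l+1)θ) • t`. -/
theorem grover_iterations
    (n : ℕ) (hn : 1 ≤ n) (A : Finset (Fin n)) (k : ℕ) (hk : k = A.card)
    (hk0 : 0 < k) (hkn : k < n)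
    (θ : ℝ) (hθ0 : 0 < θ) (hθ1 : θ < Real.pi / 2)
    (hsinθ : Real.sin θ = Real.sqrt ((k : ℝ) / (n : ℝ)))
    (s a t : EuclideanSpace ℂ (Fin n))
    (hs : s = ((Real.sqrt (n : ℝ) : ℝ) : ℂ)⁻¹ •
      ∑ i : Fin n, EuclideanSpace.single i (1 : ℂ))
    (ha : a = ((Real.sqrt (k : ℝ) : ℝ) : ℂ)⁻¹ •
      ∑ i ∈ A, EuclideanSpace.single i (1 : ℂ))
    (ht : t = ((Real.sqrt ((n : ℝ) - (k : ℝ)) : ℝ) : ℂ)⁻¹ •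
      ∑ i ∈ Aᶜ, EuclideanSpace.single i (1 : ℂ))
    (UA US : Module.End ℂ (EuclideanSpace ℂ (Fin n)))
    (hUA : ∀ i : Fin n, UA (EuclideanSpace.single i (1 : ℂ)) =
      if i ∈ A then -(EuclideanSpace.single i (1 : ℂ)) else EuclideanSpace.single i (1 : ℂ))
    (hUS : ∀ v : EuclideanSpace ℂ (Fin n), US v = (2 * (inner ℂ s v : ℂ)) • s - v) :
    ∀ l : ℕ,
      ((US * UA) ^ l) s =
        ((Real.sin ((2 * (l : ℝ) + 1) * θ) : ℝ) : ℂ) • a +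
          ((Real.cos ((2 * (l : ℝ) + 1) * θ) : ℝ) : ℂ) • t := by
  classical
  -- basic positivity
  have hn0 : (0:ℝ) < (n:ℝ) := by exact_mod_cast hk0.trans hkn
  have hk0' : (0:ℝ) < (k:ℝ) := by exact_mod_cast hk0
  have hnk : (0:ℝ) < (n:ℝ) - (k:ℝ) := by
    have : (k:ℝ) < (n:ℝ) := by exact_mod_cast hkn
    linarith
  have hsqn : (0:ℝ) < Real.sqrt (n:ℝ) := Real.sqrt_pos.mpr hn0
  have hsqk : (0:ℝ) < Real.sqrt (k:ℝ) := Real.sqrt_pos.mpr hk0'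
  have hsqnk : (0:ℝ) < Real.sqrt ((n:ℝ) - (k:ℝ)) := Real.sqrt_pos.mpr hnk
  -- trig facts
  have hsin : Real.sin θ = Real.sqrt (k:ℝ) / Real.sqrt (n:ℝ) := by
    rw [hsinθ, Real.sqrt_div (by positivity)]
  have hcosnn : 0 < Real.cos θ :=
    Real.cos_pos_of_mem_Ioo ⟨by linarith [Real.pi_pos], hθ1⟩
  have hcos : Real.cos θ = Real.sqrt ((n:ℝ) - (k:ℝ)) / Real.sqrt (n:ℝ) := by
    have h1 : Real.cos θ ^ 2 = ((n:ℝ) - (k:ℝ)) / (n:ℝ) := by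
      have hs2 : Real.sin θ ^ 2 = (k:ℝ) / (n:ℝ) := by
        rw [hsinθ, Real.sq_sqrt (by positivity)]
      have hpy := Real.sin_sq_add_cos_sq θ
      rw [hs2] at hpy
      field_simp at hpy ⊢
      linarith
    have h2 : Real.cos θ = Real.sqrt (((n:ℝ) - (k:ℝ)) / (n:ℝ)) := by
      rw [← h1, Real.sqrt_sq hcosnn.le]
    rw [h2, Real.sqrt_div hnk.le]
  -- inner products
  have hsa : (inner ℂ s a : ℂ) = ((Real.sin θ : ℝ) : ℂ) := by
    rw [hs, ha, inner_smul_left, inner_smul_right, grover_inner_sum_single,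
      Finset.univ_inter, ← hk, map_inv₀, Complex.conj_ofReal]
    have : (Real.sqrt (n:ℝ))⁻¹ * ((Real.sqrt (k:ℝ))⁻¹ * (k:ℝ)) = Real.sin θ := by
      rw [hsin]
      rw [show ((k:ℝ)) = Real.sqrt (k:ℝ) * Real.sqrt (k:ℝ) from
        (Real.mul_self_sqrt hk0'.le).symm]
      field_simp
      rw [Real.sqrt_sq hsqk.le]
    calc (((Real.sqrt (n:ℝ) : ℝ) : ℂ))⁻¹ * ((((Real.sqrt (k:ℝ) : ℝ) : ℂ))⁻¹ * ((k:ℕ) : ℂ))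
        = (((Real.sqrt (n:ℝ))⁻¹ * ((Real.sqrt (k:ℝ))⁻¹ * (k:ℝ)) : ℝ) : ℂ) := by
          push_cast; ring
      _ = ((Real.sin θ : ℝ) : ℂ) := by rw [this]
  have hst' : (inner ℂ s t : ℂ) = ((Real.cos θ : ℝ) : ℂ) := by
    rw [hs, ht, inner_smul_left, inner_smul_right, grover_inner_sum_single,
      Finset.univ_inter, map_inv₀, Complex.conj_ofReal]
    have hcard : ((Aᶜ : Finset (Fin n)).card : ℝ) = (n:ℝ) - (k:ℝ) := by
      rw [Finset.card_compl, ← hk, Fintype.card_fin, Nat.cast_sub hkn.le]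
    have : (Real.sqrt (n:ℝ))⁻¹ * ((Real.sqrt ((n:ℝ)-(k:ℝ)))⁻¹ * ((n:ℝ)-(k:ℝ))) = Real.cos θ := by
      rw [hcos]
      rw [show ((n:ℝ)-(k:ℝ)) = Real.sqrt ((n:ℝ)-(k:ℝ)) * Real.sqrt ((n:ℝ)-(k:ℝ)) from
        (Real.mul_self_sqrt hnk.le).symm]
      field_simp
      rw [Real.sqrt_sq hsqnk.le]
    calc (((Real.sqrt (n:ℝ) : ℝ) : ℂ))⁻¹ * ((((Real.sqrt ((n:ℝ)-(k:ℝ)) : ℝ) : ℂ))⁻¹ * ((Aᶜ : Finset (Fin n)).card : ℂ))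
        = (((Real.sqrt (n:ℝ))⁻¹ * ((Real.sqrt ((n:ℝ)-(k:ℝ)))⁻¹ * ((Aᶜ : Finset (Fin n)).card : ℝ)) : ℝ) : ℂ) := by
          push_cast; ring
      _ = ((Real.cos θ : ℝ) : ℂ) := by rw [hcard, this]
  -- decomposition of s
  have hst : s = ((Real.sin θ : ℝ) : ℂ) • a + ((Real.cos θ : ℝ) : ℂ) • t := by
    rw [hs, ha, ht, smul_smul, smul_smul,
      ← Finset.sum_add_sum_compl A (fun i => EuclideanSpace.single i (1:ℂ)), smul_add]
    congr 1
    · congr 1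
      have : (Real.sqrt (n:ℝ))⁻¹ = Real.sin θ * (Real.sqrt (k:ℝ))⁻¹ := by
        rw [hsin]; field_simp
      calc (((Real.sqrt (n:ℝ) : ℝ) : ℂ))⁻¹
          = (((Real.sqrt (n:ℝ))⁻¹ : ℝ) : ℂ) := by push_cast; ring
        _ = ((Real.sin θ * (Real.sqrt (k:ℝ))⁻¹ : ℝ) : ℂ) := by rw [this]
        _ = ((Real.sin θ : ℝ) : ℂ) * (((Real.sqrt (k:ℝ) : ℝ) : ℂ))⁻¹ := by push_cast; ring
    · congr 1
      have : (Real.sqrt (n:ℝ))⁻¹ = Real.cos θ * (Real.sqrt ((n:ℝ)-(k:ℝ)))⁻¹ := by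
        rw [hcos]; field_simp
      calc (((Real.sqrt (n:ℝ) : ℝ) : ℂ))⁻¹
          = (((Real.sqrt (n:ℝ))⁻¹ : ℝ) : ℂ) := by push_cast; ring
        _ = ((Real.cos θ * (Real.sqrt ((n:ℝ)-(k:ℝ)))⁻¹ : ℝ) : ℂ) := by rw [this]
        _ = ((Real.cos θ : ℝ) : ℂ) * (((Real.sqrt ((n:ℝ)-(k:ℝ)) : ℝ) : ℂ))⁻¹ := by push_cast; ring
  -- action of UA
  have hUAa : UA a = -a := by
    rw [ha, map_smul, map_sum]
    rw [Finset.sum_congr rfl (fun i hi => by rw [hUA i, if_pos hi])]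
    rw [Finset.sum_neg_distrib, smul_neg]
  have hUAt : UA t = t := by
    rw [ht, map_smul, map_sum]
    rw [Finset.sum_congr rfl (fun i hi => by
      rw [hUA i, if_neg (Finset.mem_compl.mp hi)])]
  -- induction
  intro l
  induction l with
  | zero =>
      simp only [pow_zero, Module.End.one_apply, Nat.cast_zero]
      rw [show (2 * (0:ℝ) + 1) * θ = θ by ring]
      exact hst
  | succ l ih =>
      set α := Real.sin ((2 * (l:ℝ) + 1) * θ) with hα
      set β := Real.cos ((2 * (l:ℝ) + 1) * θ) with hβ
      have hra : Real.sin ((2 * ((l:ℝ) + 1) + 1) * θ)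
          = 2 * (α * -Real.sin θ + β * Real.cos θ) * Real.sin θ + α := by
        rw [show (2 * ((l:ℝ) + 1) + 1) * θ = (2 * (l:ℝ) + 1) * θ + 2 * θ by ring,
          Real.sin_add, Real.sin_two_mul, Real.cos_two_mul]
        have hpy := Real.sin_sq_add_cos_sq θ
        linear_combination (2 * α) * hpy
      have hrt : Real.cos ((2 * ((l:ℝ) + 1) + 1) * θ)
          = 2 * (α * -Real.sin θ + β * Real.cos θ) * Real.cos θ - β := by
        rw [show (2 * ((l:ℝ) + 1) + 1) * θ = (2 * (l:ℝ) + 1) * θ + 2 * θ by ring,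
          Real.cos_add, Real.sin_two_mul, Real.cos_two_mul]
        ring
      rw [pow_succ', Module.End.mul_apply, ih, Module.End.mul_apply]
      have h1 : UA (((α : ℝ) : ℂ) • a + ((β : ℝ) : ℂ) • t)
          = ((α : ℝ) : ℂ) • (-a) + ((β : ℝ) : ℂ) • t := by
        rw [map_add, map_smul, map_smul, hUAa, hUAt]
      rw [h1, hUS]
      have hinner : (inner ℂ s (((α : ℝ) : ℂ) • (-a) + ((β : ℝ) : ℂ) • t) : ℂ)
          = ((α : ℝ) : ℂ) * -((Real.sin θ : ℝ) : ℂ) + ((β : ℝ) : ℂ) * ((Real.cos θ : ℝ) : ℂ) := by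
        rw [inner_add_right, inner_smul_right, inner_smul_right, inner_neg_right, hsa, hst']
      rw [hinner, hst]
      simp only [Nat.cast_add, Nat.cast_one]
      rw [show ((Real.sin ((2 * ((l:ℝ) + 1) + 1) * θ) : ℝ) : ℂ)
          = 2 * (((α:ℝ):ℂ) * -((Real.sin θ:ℝ):ℂ) + ((β:ℝ):ℂ) * ((Real.cos θ:ℝ):ℂ)) * ((Real.sin θ:ℝ):ℂ) + ((α:ℝ):ℂ) from by
        rw [hra]; push_cast; ring]
      rw [show ((Real.cos ((2 * ((l:ℝ) + 1) + 1) * θ) : ℝ) : ℂ)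
          = 2 * (((α:ℝ):ℂ) * -((Real.sin θ:ℝ):ℂ) + ((β:ℝ):ℂ) * ((Real.cos θ:ℝ):ℂ)) * ((Real.cos θ:ℝ):ℂ) - ((β:ℝ):ℂ) from by
        rw [hrt]; push_cast; ring]
      module
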